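/- Let k ∈ ℕ, α > 0, θ ∈ ℝ^k, and suppose σ_P² satisfies α² + ‖θ‖²/k ≤ σ_P² ≤ e^{1/k}(α² + ‖θ‖²/k). Then the KL divergence (1/2)[(kα² + ‖θ‖²)/σ_P² - k + k ln(σ_P²/α²)] is at most (1/2)[1 + k ln(1 + ‖θ‖²/(kα²))]. -/

import Mathlib

/-- If `σ_P²` lies in the bracket `[α² + ‖θ‖²/k, e^{1/k}(α² + ‖θ‖²/k)]`, then the
KL divergence `(1/2)[(kα² + ‖θ‖²)/σ_P² - k + k ln(σ_P²/α²)]` is at most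
`(1/2)[1 + k ln(1 + ‖θ‖²/(kα²))]`. -/
theorem klDiv_bound_of_sigma_bracket (k : ℕ) (hk : 0 < k) (α : ℝ) (hα : 0 < α)
    (θ : EuclideanSpace ℝ (Fin k)) (σP2 : ℝ)
    (hlo : α ^ 2 + ‖θ‖ ^ 2 / k ≤ σP2)
    (hhi : σP2 ≤ Real.exp (1 / k) * (α ^ 2 + ‖θ‖ ^ 2 / k)) :
    (1 / 2) * ((k * α ^ 2 + ‖θ‖ ^ 2) / σP2 - k + k * Real.log (σP2 / α ^ 2))
      ≤ (1 / 2) * (1 + k * Real.log (1 + ‖θ‖ ^ 2 / (k * α ^ 2))) := by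
  have hk' : (0 : ℝ) < k := by exact_mod_cast hk
  have hα2 : (0 : ℝ) < α ^ 2 := by positivity
  set A : ℝ := α ^ 2 + ‖θ‖ ^ 2 / k with hA
  have hA0 : 0 < A := by positivity
  have hσ : 0 < σP2 := lt_of_lt_of_le hA0 hlo
  -- first part: (k*α² + ‖θ‖²)/σP2 ≤ k
  have h1 : (k * α ^ 2 + ‖θ‖ ^ 2) / σP2 ≤ k := by
    rw [div_le_iff₀ hσ]
    have : (k : ℝ) * α ^ 2 + ‖θ‖ ^ 2 = k * A := by
      field_simp [hA]; rw [hA, mul_add, mul_div_cancel₀ _ (ne_of_gt hk')]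
    rw [this]
    exact mul_le_mul_of_nonneg_left hlo (le_of_lt hk')
  -- second part: log(σP2/α²) ≤ 1/k + log(A/α²)
  have hlogA : Real.log (A / α ^ 2) = Real.log (1 + ‖θ‖ ^ 2 / (k * α ^ 2)) := by
    congr 1
    field_simp [hA]
    rw [hA, add_mul, div_mul_cancel₀ _ (ne_of_gt hk')]
  have h2 : Real.log (σP2 / α ^ 2) ≤ 1 / k + Real.log (1 + ‖θ‖ ^ 2 / (k * α ^ 2)) := by
    rw [← hlogA]
    have hle : σP2 / α ^ 2 ≤ Real.exp (1 / k) * (A / α ^ 2) := by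
      rw [div_le_iff₀ hα2, mul_assoc, div_mul_cancel₀ _ (ne_of_gt hα2)]
      exact hhi
    calc Real.log (σP2 / α ^ 2) ≤ Real.log (Real.exp (1 / k) * (A / α ^ 2)) :=
          Real.log_le_log (by positivity) hle
      _ = 1 / k + Real.log (A / α ^ 2) := by
          rw [Real.log_mul (Real.exp_ne_zero _) (by positivity), Real.log_exp]
  have h3 : (k : ℝ) * Real.log (σP2 / α ^ 2) ≤
      1 + k * Real.log (1 + ‖θ‖ ^ 2 / (k * α ^ 2)) := by
    have := mul_le_mul_of_nonneg_left h2 (le_of_lt hk')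
    calc (k : ℝ) * Real.log (σP2 / α ^ 2)
        ≤ k * (1 / k + Real.log (1 + ‖θ‖ ^ 2 / (k * α ^ 2))) := this
      _ = 1 + k * Real.log (1 + ‖θ‖ ^ 2 / (k * α ^ 2)) := by
          field_simp
  have : (k * α ^ 2 + ‖θ‖ ^ 2) / σP2 - k + k * Real.log (σP2 / α ^ 2)
      ≤ 1 + k * Real.log (1 + ‖θ‖ ^ 2 / (k * α ^ 2)) := by
    have h1' : (k * α ^ 2 + ‖θ‖ ^ 2) / σP2 - k ≤ 0 := sub_nonpos.mpr h1
    linarith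
  linarith
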